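/- (Linear growth of cost away from the ω-limit set.) Let Π^t be a continuous flow on ℝ^d depending continuously on initial conditions, and G ⊆ X a compact set that does not entirely contain any forward semi-orbit of Π^t, i.e., for every x ∈ G there is t ≥ 0 with Π^t x ∉ G. Let S_{0t} be lower semicontinuous, concatenation-subadditive path functionals with the property that S_{0T}(γ) = 0 if and only if γ is an orbit segment of Π^t. Then there exist a > 0 and T > 0 such that for every t ≥ 0 and every γ ∈ C([0,t], ℝ^d) with γ_s ∈ G for all s ∈ [0,t], one has S_{0t}(γ) ≥ a ⌊t/T⌋. -/

import Mathlib

open scoped ENNReal NNReal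

/-- Linear growth of the cost away from the ω-limit set: if no forward semi-orbit of
the continuous flow `Φ` stays forever in the compact set `G`, and the path functionals
`S` are additive in time, lower semicontinuous under uniform convergence, and vanish
exactly on orbit segments, then there are `a, T > 0` such that every `K`-Lipschitz path
staying in `G` on `[0,t]` has cost at least `a⌊t/T⌋`. -/
theorem stmt_14 {d : ℕ} (K : ℝ≥0)
    (Φ : ℝ → EuclideanSpace ℝ (Fin d) → EuclideanSpace ℝ (Fin d))
    (hΦc : Continuous fun p : ℝ × EuclideanSpace ℝ (Fin d) => Φ p.1 p.2)
    (hΦ0 : ∀ x, Φ 0 x = x)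
    (hΦgrp : ∀ t s x, Φ (t + s) x = Φ t (Φ s x))
    (G : Set (EuclideanSpace ℝ (Fin d))) (hGc : IsCompact G)
    (hesc : ∀ x ∈ G, ∃ t : ℝ, 0 ≤ t ∧ Φ t x ∉ G)
    (S : ℝ → (ℝ → EuclideanSpace ℝ (Fin d)) → ℝ≥0∞)
    (hadd : ∀ (γ : ℝ → EuclideanSpace ℝ (Fin d)) (t s : ℝ), 0 ≤ t → 0 ≤ s →
      S (t + s) γ = S t γ + S s (fun u => γ (t + u)))
    (hlsc : ∀ T : ℝ, 0 ≤ T → ∀ (γn : ℕ → ℝ → EuclideanSpace ℝ (Fin d))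
      (γ : ℝ → EuclideanSpace ℝ (Fin d)),
      TendstoUniformlyOn γn γ Filter.atTop (Set.Icc 0 T) →
      S T γ ≤ Filter.liminf (fun n => S T (γn n)) Filter.atTop)
    (hzero : ∀ T : ℝ, 0 ≤ T → ∀ γ : ℝ → EuclideanSpace ℝ (Fin d),
      LipschitzOnWith K γ (Set.Icc 0 T) →
      (S T γ = 0 ↔ ∀ s ∈ Set.Icc (0:ℝ) T, γ s = Φ s (γ 0))) :
    ∃ a T : ℝ, 0 < a ∧ 0 < T ∧ ∀ t : ℝ, 0 ≤ t →
      ∀ γ : ℝ → EuclideanSpace ℝ (Fin d), LipschitzOnWith K γ (Set.Icc 0 t) →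
        (∀ s ∈ Set.Icc (0:ℝ) t, γ s ∈ G) →
        ENNReal.ofReal a * (⌊t / T⌋₊ : ℝ≥0∞) ≤ S t γ := by
  classical
  -- Step 1: a uniform escape time `T`.
  have hesc' : ∀ x : EuclideanSpace ℝ (Fin d), ∃ t : ℝ, 0 ≤ t ∧ (x ∈ G → Φ t x ∉ G) := by
    intro x
    by_cases hx : x ∈ G
    · obtain ⟨t, ht, ht'⟩ := hesc x hx
      exact ⟨t, ht, fun _ => ht'⟩
    · exact ⟨0, le_refl _, fun h => absurd h hx⟩
  choose τ hτ0 hτesc using hesc'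
  obtain ⟨T, hT, hTesc⟩ :
      ∃ T : ℝ, 0 < T ∧ ∀ x ∈ G, ∃ s, s ∈ Set.Icc (0:ℝ) T ∧ Φ s x ∉ G := by
    have hopen : ∀ c : EuclideanSpace ℝ (Fin d), IsOpen ((fun y => Φ (τ c) y) ⁻¹' Gᶜ) := fun c =>
      (hGc.isClosed.isOpen_compl).preimage
        (hΦc.comp (continuous_const.prodMk continuous_id))
    have hcover : G ⊆ ⋃ c : EuclideanSpace ℝ (Fin d), (fun y => Φ (τ c) y) ⁻¹' Gᶜ := fun x hx =>
      Set.mem_iUnion.2 ⟨x, hτesc x hx⟩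
    obtain ⟨s, hs⟩ := hGc.elim_finite_subcover _ hopen hcover
    have hsum : (0:ℝ) ≤ ∑ c ∈ s, τ c := Finset.sum_nonneg fun i _ => hτ0 i
    refine ⟨1 + ∑ c ∈ s, τ c, by linarith, ?_⟩
    · intro x hx
      obtain ⟨c, hc, hxc⟩ := Set.mem_iUnion₂.1 (hs hx)
      refine ⟨τ c, ⟨hτ0 c, ?_⟩, hxc⟩
      have h1 : τ c ≤ ∑ c ∈ s, τ c :=
        Finset.single_le_sum (fun i _ => hτ0 i) hc
      linarith
  -- Step 2: a uniform positive lower bound `a` for paths of length `T` in `G`.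
  have main : ∃ a : ℝ, 0 < a ∧ ∀ γ : ℝ → EuclideanSpace ℝ (Fin d), LipschitzOnWith K γ (Set.Icc 0 T) →
      (∀ s ∈ Set.Icc (0:ℝ) T, γ s ∈ G) → ENNReal.ofReal a ≤ S T γ := by
    by_contra hcon
    push_neg at hcon
    have hcon' : ∀ n : ℕ, ∃ γ : ℝ → EuclideanSpace ℝ (Fin d), LipschitzOnWith K γ (Set.Icc 0 T) ∧
        (∀ s ∈ Set.Icc (0:ℝ) T, γ s ∈ G) ∧ S T γ < ENNReal.ofReal (1 / (n + 1)) := by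
      intro n
      obtain ⟨γ, h1, h2, h3⟩ := hcon (1 / (n + 1)) (by positivity)
      exact ⟨γ, h1, h2, h3⟩
    choose γn hlipn hGn hsmall using hcon'
    have hto0 : Filter.Tendsto (fun n => S T (γn n)) Filter.atTop (nhds 0) := by
      have hub : Filter.Tendsto (fun n : ℕ => ENNReal.ofReal (1 / (n + 1)))
          Filter.atTop (nhds 0) := by
        have := (ENNReal.continuous_ofReal.tendsto 0).comp
          tendsto_one_div_add_atTop_nhds_zero_nat
        simpa [Function.comp_def] using this
      exact tendsto_of_tendsto_of_tendsto_of_le_of_le tendsto_const_nhds hub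
        (fun n => zero_le) (fun n => (hsmall n).le)
    -- Arzelà–Ascoli on `C(Icc 0 T, E)`.
    set X := Set.Icc (0:ℝ) T
    haveI : CompactSpace X := isCompact_iff_compactSpace.mp isCompact_Icc
    set A : Set C(X, EuclideanSpace ℝ (Fin d)) := {f | LipschitzWith K f ∧ ∀ x : X, f x ∈ G} with hA
    have hAcomp : IsCompact A := by
      apply ArzelaAscoli.isCompact_of_equicontinuous
      · have himg : ContinuousMap.toFun '' A
            = {g : X → EuclideanSpace ℝ (Fin d) | LipschitzWith K g ∧ ∀ x, g x ∈ G} := by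
          ext g
          constructor
          · rintro ⟨f, hf, rfl⟩; exact hf
          · rintro ⟨h1, h2⟩; exact ⟨⟨g, h1.continuous⟩, ⟨h1, h2⟩, rfl⟩
        rw [himg]
        have hclosed : IsClosed {g : X → EuclideanSpace ℝ (Fin d) | LipschitzWith K g ∧ ∀ x, g x ∈ G} := by
          have h1 : IsClosed {g : X → EuclideanSpace ℝ (Fin d) | LipschitzWith K g} := by
            have heq : {g : X → EuclideanSpace ℝ (Fin d) | LipschitzWith K g}
                = ⋂ (x : X) (y : X), {g : X → EuclideanSpace ℝ (Fin d) | dist (g x) (g y) ≤ K * dist x y} := by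
              ext g
              simp [lipschitzWith_iff_dist_le_mul, Set.mem_iInter]
            rw [heq]
            exact isClosed_iInter fun x => isClosed_iInter fun y =>
              isClosed_le ((continuous_apply x).dist (continuous_apply y)) continuous_const
          have h2 : IsClosed {g : X → EuclideanSpace ℝ (Fin d) | ∀ x, g x ∈ G} := by
            have heq : {g : X → EuclideanSpace ℝ (Fin d) | ∀ x, g x ∈ G} = Set.pi Set.univ fun _ => G := by
              ext g; simp [Set.mem_pi]
            rw [heq]
            exact isClosed_set_pi fun x _ => hGc.isClosed
          exact h1.inter h2
        refine (isCompact_univ_pi fun _ : X => hGc).of_isClosed_subset hclosed ?_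
        intro g hg
        simp only [Set.mem_univ_pi]
        exact fun x => hg.2 x
      · refine UniformEquicontinuous.equicontinuous ?_
        refine Metric.uniformEquicontinuous_of_continuity_modulus (fun t => K * t) ?_ _ ?_
        · have : Filter.Tendsto (fun t : ℝ => (K : ℝ) * t) (nhds 0) (nhds ((K : ℝ) * 0)) :=
            (continuous_const.mul continuous_id).tendsto 0
          simpa using this
        · intro x y i
          exact i.2.1.dist_le_mul x y
    -- restrictions of the minimizing sequence
    have hcontn : ∀ n, Continuous (X.restrict (γn n)) := fun n =>
      ((hlipn n).to_restrict).continuous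
    set fn : ℕ → C(X, EuclideanSpace ℝ (Fin d)) := fun n => ⟨X.restrict (γn n), hcontn n⟩ with hfn
    have hmem : ∀ n, fn n ∈ A := fun n =>
      ⟨(hlipn n).to_restrict, fun x => hGn n x x.2⟩
    obtain ⟨f, hfA, φ, hφ, hconv⟩ := hAcomp.tendsto_subseq hmem
    -- the limit path
    set γ : ℝ → EuclideanSpace ℝ (Fin d) := fun s => f (Set.projIcc 0 T hT.le s) with hγ
    have hγeq : ∀ s (hs : s ∈ Set.Icc (0:ℝ) T), γ s = f ⟨s, hs⟩ := by
      intro s hs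
      simp [hγ, Set.projIcc_of_mem hT.le hs]
    have hγlip : LipschitzOnWith K γ (Set.Icc 0 T) := by
      intro u hu v hv
      have h := hfA.1 ⟨u, hu⟩ ⟨v, hv⟩
      rw [hγeq u hu, hγeq v hv]
      simpa [Subtype.edist_eq] using h
    have hγG : ∀ s ∈ Set.Icc (0:ℝ) T, γ s ∈ G := by
      intro s hs
      rw [hγeq s hs]
      exact hfA.2 _
    -- uniform convergence of the subsequence
    have huc : TendstoUniformlyOn (fun n => γn (φ n)) γ Filter.atTop (Set.Icc 0 T) := by
      rw [Metric.tendstoUniformlyOn_iff]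
      intro ε hε
      have hd := Metric.tendsto_nhds.mp hconv ε hε
      filter_upwards [hd] with n hn s hs
      have h1 : dist (fn (φ n) ⟨s, hs⟩) (f ⟨s, hs⟩) ≤ dist (fn (φ n)) f :=
        ContinuousMap.dist_apply_le_dist _
      have h2 : dist (γ s) (γn (φ n) s) = dist (fn (φ n) ⟨s, hs⟩) (f ⟨s, hs⟩) := by
        rw [hγeq s hs, dist_comm]
        rfl
      rw [h2]
      calc dist (fn (φ n) ⟨s, hs⟩) (f ⟨s, hs⟩) ≤ dist (fn (φ n)) f := h1
        _ = dist ((fn ∘ φ) n) f := rfl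
        _ < ε := hn
    -- cost of the limit is zero, so it is an orbit segment, contradiction
    have hS0 : S T γ = 0 := by
      have h1 := hlsc T hT.le (fun n => γn (φ n)) γ huc
      have h2 : Filter.Tendsto (fun n => S T (γn (φ n))) Filter.atTop (nhds 0) :=
        hto0.comp hφ.tendsto_atTop
      rw [h2.liminf_eq] at h1
      exact le_antisymm h1 zero_le
    have horbit := (hzero T hT.le γ hγlip).mp hS0
    have hγ0 : γ 0 ∈ G := hγG 0 ⟨le_refl _, hT.le⟩
    obtain ⟨s, hsIcc, hsout⟩ := hTesc (γ 0) hγ0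
    exact hsout (horbit s hsIcc ▸ hγG s hsIcc)
  obtain ⟨a, ha, hbound⟩ := main
  refine ⟨a, T, ha, hT, ?_⟩
  -- Step 3: iterate via additivity.
  have key : ∀ n : ℕ, ∀ t : ℝ, ∀ γ : ℝ → EuclideanSpace ℝ (Fin d), LipschitzOnWith K γ (Set.Icc 0 t) →
      (∀ s ∈ Set.Icc (0:ℝ) t, γ s ∈ G) → (n : ℝ) * T ≤ t →
      ENNReal.ofReal a * (n : ℝ≥0∞) ≤ S t γ := by
    intro n
    induction n with
    | zero => intro t γ _ _ _; simp
    | succ n ih =>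
      intro t γ hlip hG' hn
      have hcast : ((n + 1 : ℕ) : ℝ) = (n : ℝ) + 1 := by push_cast; ring
      rw [hcast] at hn
      have hn0 : (0:ℝ) ≤ (n : ℝ) := Nat.cast_nonneg n
      have hTt : T ≤ t := by nlinarith
      have hsplit : S t γ = S T γ + S (t - T) (fun u => γ (T + u)) := by
        have h := hadd γ T (t - T) hT.le (by linarith)
        rw [show T + (t - T) = t by ring] at h
        exact h
      have h1 : ENNReal.ofReal a ≤ S T γ :=
        hbound γ (hlip.mono (Set.Icc_subset_Icc_right hTt))
          (fun s hs => hG' s ⟨hs.1, hs.2.trans hTt⟩)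
      have hlip2 : LipschitzOnWith K (fun u => γ (T + u)) (Set.Icc 0 (t - T)) := by
        intro u hu v hv
        have hu' : T + u ∈ Set.Icc (0:ℝ) t := ⟨by linarith [hu.1], by linarith [hu.2]⟩
        have hv' : T + v ∈ Set.Icc (0:ℝ) t := ⟨by linarith [hv.1], by linarith [hv.2]⟩
        have h := hlip hu' hv'
        have hed : edist (T + u) (T + v) = edist u v := by
          simp [edist_dist, Real.dist_eq, add_sub_add_left_eq_sub]
        rwa [hed] at h
      have hG2 : ∀ s ∈ Set.Icc (0:ℝ) (t - T), γ (T + s) ∈ G := fun s hs =>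
        hG' _ ⟨by linarith [hs.1], by linarith [hs.2]⟩
      have h2 := ih (t - T) _ hlip2 hG2 (by linarith)
      calc ENNReal.ofReal a * ((n + 1 : ℕ) : ℝ≥0∞)
          = ENNReal.ofReal a + ENNReal.ofReal a * (n : ℝ≥0∞) := by
            push_cast
            ring
        _ ≤ S T γ + S (t - T) (fun u => γ (T + u)) := add_le_add h1 h2
        _ = S t γ := hsplit.symm
  intro t ht γ hlip hG'
  refine key ⌊t / T⌋₊ t γ hlip hG' ?_
  have h := Nat.floor_le (div_nonneg ht hT.le)
  calc (⌊t / T⌋₊ : ℝ) * T ≤ (t / T) * T := by nlinarith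
    _ = t := by field_simp
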